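/- arXiv:1706.09349 — 3 statements merged into one kernel-verified Lean document; each statement's English description precedes it below -/
import Mathlib

section
/- Optimal Łojasiewicz–Simon gradient inequality for C² Morse–Bott functions on Banach spaces (Theorem 3 of the paper, straightened form). Let X, G, Y, H be real Banach spaces with continuous embeddings X ⊂ G and Y ⊂ H ⊂ G* ⊂ X*, where the embedding G* ⊂ X* is the transpose (adjoint) of the embedding X ⊂ G. Let U ⊂ X be an open convex subset, let E : U → ℝ be a C² function, let x∞ ∈ U be a critical point of E (E'(x∞) = 0), and let M : U → Y be a C¹ gradient map for E. Set K := ker E''(x∞) (the kernel of the bounded operator E''(x∞) : X → X*, a ↦ E''(x∞)(a,·)), and assume E is Morse–Bott at x∞ in the straightened sense that Crit E ∩ U = (x∞ + K) ∩ U. Assume further: (i) for each x ∈ U the bounded operator M'(x) : X → Y admits a bounded extension M₁(x) : G → H, meaning that M₁(x) composed with the embedding X ⊂ G agrees with M'(x) composed with the embedding Y ⊂ H, and the map U ∋ x ↦ M₁(x) ∈ L(G,H) is continuous in the operator norm; (ii) K has a closed complement X₀ in X; (iii) ker M₁(x∞) has a closed complement G₀ in G with X₀ ⊂ G₀ (via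 the embedding X ⊂ G); and (iv) the range of M₁(x∞) is a closed subspace of H. Then there exist constants Z > 0 and σ ∈ (0,1] such that every x ∈ U with ‖x − x∞‖_X < σ satisfies ‖M(x)‖_H ≥ Z · |E(x) − E(x∞)|^{1/2}. -/
open Set

theorem lsgi_aux_mu {G H : Type*}
    [NormedAddCommGroup G] [NormedSpace ℝ G] [CompleteSpace G]
    [NormedAddCommGroup H] [NormedSpace ℝ H] [CompleteSpace H]
    (A : G →L[ℝ] H) (G₀ : Submodule ℝ G) (hG₀closed : IsClosed (G₀ : Set G))
    (hG₀compl : IsCompl (LinearMap.ker (A : G →ₗ[ℝ] H)) G₀)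
    (hRange : IsClosed ((LinearMap.range (A : G →ₗ[ℝ] H)) : Set H)) :
    ∃ μ : ℝ, 0 < μ ∧ ∀ g ∈ G₀, μ * ‖g‖ ≤ ‖A g‖ := by
  haveI : CompleteSpace G₀ := hG₀closed.completeSpace_coe
  haveI : CompleteSpace (LinearMap.range (A : G →ₗ[ℝ] H)) := hRange.completeSpace_coe
  set A₀ : G₀ →L[ℝ] LinearMap.range (A : G →ₗ[ℝ] H) :=
    (A.comp G₀.subtypeL).codRestrict (LinearMap.range (A : G →ₗ[ℝ] H))
      (fun g => LinearMap.mem_range_self _ _) with hA₀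
  have hker : LinearMap.ker (A₀ : G₀ →ₗ[ℝ] LinearMap.range (A : G →ₗ[ℝ] H)) = ⊥ := by
    rw [LinearMap.ker_eq_bot']
    intro g hg
    have h1 : A (g : G) = 0 := by
      have := congrArg (Subtype.val) hg
      exact this
    have h2 : (g : G) ∈ LinearMap.ker (A : G →ₗ[ℝ] H) := h1
    have := (Submodule.disjoint_def.mp hG₀compl.disjoint) (g : G) h2 g.2
    exact Subtype.ext this
  have hsurj : LinearMap.range (A₀ : G₀ →ₗ[ℝ] LinearMap.range (A : G →ₗ[ℝ] H)) = ⊤ := by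
    rw [LinearMap.range_eq_top]
    rintro ⟨h, g, rfl⟩
    have hgtop : g ∈ (LinearMap.ker (A : G →ₗ[ℝ] H)) ⊔ G₀ := by
      rw [hG₀compl.sup_eq_top]; trivial
    obtain ⟨a, ha, b, hb, hab⟩ := Submodule.mem_sup.mp hgtop
    refine ⟨⟨b, hb⟩, ?_⟩
    apply Subtype.ext
    have hAa : A a = 0 := ha
    simp only [A₀, ContinuousLinearMap.coe_codRestrict_apply,
      ContinuousLinearMap.coe_comp', Function.comp_apply, Submodule.coe_subtypeL',
      Submodule.coe_subtype]
    rw [← hab, map_add]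
    change A b = A a + A b
    rw [hAa, zero_add]
  set e := ContinuousLinearEquiv.ofBijective A₀ hker hsurj with he
  set c : ℝ := ‖(e.symm : LinearMap.range (A : G →ₗ[ℝ] H) →L[ℝ] G₀)‖ + 1 with hc
  have hc0 : 0 < c := by positivity
  refine ⟨c⁻¹, by positivity, ?_⟩
  intro g hg
  have key : ‖(⟨g, hg⟩ : G₀)‖ ≤ c * ‖A g‖ := by
    have h1 : (⟨g, hg⟩ : G₀) = e.symm (e ⟨g, hg⟩) := (e.symm_apply_apply _).symm
    have h2 : ‖e.symm (e ⟨g, hg⟩)‖ ≤ ‖(e.symm : LinearMap.range (A : G →ₗ[ℝ] H) →L[ℝ] G₀)‖ * ‖e ⟨g, hg⟩‖ :=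
      (e.symm : LinearMap.range (A : G →ₗ[ℝ] H) →L[ℝ] G₀).le_opNorm _
    have h3 : ‖e (⟨g, hg⟩ : G₀)‖ = ‖A g‖ := by
      have : ((e (⟨g, hg⟩ : G₀)) : H) = A g := by
        simp [he, A₀, ContinuousLinearEquiv.ofBijective]
        rfl
      rw [← this]; rfl
    calc ‖(⟨g, hg⟩ : G₀)‖ ≤ ‖(e.symm : LinearMap.range (A : G →ₗ[ℝ] H) →L[ℝ] G₀)‖ * ‖A g‖ := by
          rw [h1]; rw [h3] at h2; exact h2
      _ ≤ c * ‖A g‖ := by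
          apply mul_le_mul_of_nonneg_right _ (norm_nonneg _)
          simp [hc]
  have hnorm : ‖(⟨g, hg⟩ : G₀)‖ = ‖g‖ := rfl
  rw [hnorm] at key
  rw [inv_mul_le_iff₀ hc0]
  linarith [key]


set_option maxHeartbeats 2000000 in
/-- **Optimal Łojasiewicz–Simon gradient inequality for C² Morse–Bott functions on Banach
spaces** (Theorem 3 of the paper, straightened form).  `X, G, Y, H` are real Banach spaces with
continuous embeddings `X ⊂ G` (via `jXG`) and `Y ⊂ H ⊂ G* ⊂ X*` (via `jYH`, `jHG`, and the
transpose of `jXG`, respectively).  `U ⊂ X` is open and convex, `E : U → ℝ` is `C²` with critical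
point `xinf`, and `M : U → Y` is a `C¹` gradient map for `E`.  `E` is Morse–Bott at `xinf` in the
straightened sense that `Crit E ∩ U = (xinf + K) ∩ U` where `K = ker E''(xinf)`.  Each `M'(x)`
admits a bounded extension `M₁(x) : G → H` depending continuously on `x` in the operator norm,
`K` has a closed complement `X₀` in `X`, `ker M₁(xinf)` has a closed complement `G₀ ⊇ X₀` in `G`,
and `ran M₁(xinf)` is closed in `H`.  Then `‖M(x)‖_H ≥ Z |E(x) − E(xinf)|^{1/2}` for all `x ∈ U`
with `‖x − xinf‖_X < σ`. -/
theorem lojasiewicz_simon_gradient_inequality_morse_bott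
    {X G Y H : Type*}
    [NormedAddCommGroup X] [NormedSpace ℝ X] [CompleteSpace X]
    [NormedAddCommGroup G] [NormedSpace ℝ G] [CompleteSpace G]
    [NormedAddCommGroup Y] [NormedSpace ℝ Y] [CompleteSpace Y]
    [NormedAddCommGroup H] [NormedSpace ℝ H] [CompleteSpace H]
    -- continuous embeddings X ⊂ G, Y ⊂ H, H ⊂ G*
    (jXG : X →L[ℝ] G) (hjXG : Function.Injective jXG)
    (jYH : Y →L[ℝ] H) (hjYH : Function.Injective jYH)
    (jHG : H →L[ℝ] (G →L[ℝ] ℝ)) (hjHG : Function.Injective jHG)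
    -- the embedding G* ⊂ X* is the transpose of X ⊂ G (and is injective)
    (hTransInj : Function.Injective fun φ : G →L[ℝ] ℝ => φ.comp jXG)
    -- open convex domain
    {U : Set X} (hUopen : IsOpen U) (hUconv : Convex ℝ U)
    -- E is C² on U with critical point xinf ∈ U
    (E : X → ℝ) (hE : ContDiffOn ℝ 2 E U)
    (xinf : X) (hxinf : xinf ∈ U) (hcrit : fderiv ℝ E xinf = 0)
    -- M is a C¹ gradient map for E (M x regarded in X* via Y ⊂ H ⊂ G* ⊂ X*)
    (M : X → Y) (hM : ContDiffOn ℝ 1 M U)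
    (hgrad : ∀ x ∈ U, ∀ v : X, fderiv ℝ E x v = jHG (jYH (M x)) (jXG v))
    -- E is Morse–Bott at xinf in the straightened sense: Crit E ∩ U = (xinf + K) ∩ U,
    -- where K = ker E''(xinf)
    (hMB : ∀ x ∈ U, fderiv ℝ E x = 0 ↔
      x - xinf ∈ LinearMap.ker ((fderiv ℝ (fderiv ℝ E) xinf : X →L[ℝ] (X →L[ℝ] ℝ)) : X →ₗ[ℝ] (X →L[ℝ] ℝ)))
    -- (i): each M'(x) extends to a bounded operator M₁(x) : G → H,
    -- continuously in x in the operator norm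
    (M₁ : X → (G →L[ℝ] H))
    (hExt : ∀ x ∈ U, ∀ v : X, M₁ x (jXG v) = jYH (fderiv ℝ M x v))
    (hM₁cont : ContinuousOn M₁ U)
    -- (ii): K has a closed complement X₀ in X
    (X₀ : Submodule ℝ X) (hX₀closed : IsClosed (X₀ : Set X))
    (hX₀compl : IsCompl (LinearMap.ker ((fderiv ℝ (fderiv ℝ E) xinf : X →L[ℝ] (X →L[ℝ] ℝ)) : X →ₗ[ℝ] (X →L[ℝ] ℝ))) X₀)
    -- (iii): ker M₁(xinf) has a closed complement G₀ in G with X₀ ⊂ G₀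
    (G₀ : Submodule ℝ G) (hG₀closed : IsClosed (G₀ : Set G))
    (hG₀compl : IsCompl (LinearMap.ker ((M₁ xinf : G →L[ℝ] H) : G →ₗ[ℝ] H)) G₀)
    (hX₀G₀ : ∀ v ∈ X₀, jXG v ∈ G₀)
    -- (iv): the range of M₁(xinf) is closed in H
    (hRange : IsClosed ((LinearMap.range ((M₁ xinf : G →L[ℝ] H) : G →ₗ[ℝ] H)) : Set H)) :
    ∃ Z : ℝ, 0 < Z ∧ ∃ σ ∈ Ioc (0 : ℝ) 1, ∀ x ∈ U, ‖x - xinf‖ < σ →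
      ‖jYH (M x)‖ ≥ Z * Real.sqrt |E x - E xinf| := by

  classical
  set K : Submodule ℝ X := LinearMap.ker ((fderiv ℝ (fderiv ℝ E) xinf : X →L[ℝ] (X →L[ℝ] ℝ)) : X →ₗ[ℝ] (X →L[ℝ] ℝ)) with hK
  have hKclosed : IsClosed (K : Set X) := ContinuousLinearMap.isClosed_ker _
  -- step 1: lower bound μ for M₁ xinf on G₀
  obtain ⟨μ, hμ0, hμ⟩ := lsgi_aux_mu (M₁ xinf) G₀ hG₀closed hG₀compl hRange
  -- continuity of M₁ at xinf
  have hcontAt : ContinuousAt M₁ xinf := hM₁cont.continuousAt (hUopen.mem_nhds hxinf)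
  obtain ⟨δ₁, hδ₁0, hδ₁⟩ := Metric.continuousAt_iff.mp hcontAt (μ/2) (by positivity)
  obtain ⟨δ₂, hδ₂0, hδ₂⟩ := Metric.isOpen_iff.mp hUopen xinf hxinf
  set δ : ℝ := min δ₁ δ₂ with hδdef
  have hδ0 : 0 < δ := lt_min hδ₁0 hδ₂0
  have hballU : Metric.ball xinf δ ⊆ U := fun y hy =>
    hδ₂ (Metric.ball_subset_ball (min_le_right _ _) hy)
  have hM₁close : ∀ y ∈ Metric.ball xinf δ, ‖M₁ y - M₁ xinf‖ ≤ μ/2 := by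
    intro y hy
    have : dist (M₁ y) (M₁ xinf) < μ/2 :=
      hδ₁ (Metric.ball_subset_ball (min_le_left _ _) hy)
    rw [dist_eq_norm] at this
    exact this.le
  -- projections
  set pK : X →L[ℝ] K := K.linearProjOfClosedCompl X₀ hX₀compl hKclosed hX₀closed with hpK
  set CK : ℝ := ‖K.subtypeL.comp pK‖ with hCK
  have hCK0 : 0 ≤ CK := norm_nonneg _
  -- constants
  set CB : ℝ := ‖M₁ xinf‖ + μ/2 with hCB
  have hCB0 : 0 ≤ CB := by positivity
  set D : ℝ := ‖jHG‖ * CB with hD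
  have hD0 : 0 ≤ D := by positivity
  set Z : ℝ := μ / (2 * Real.sqrt (D + 1)) with hZ
  have hsqrt0 : 0 < Real.sqrt (D + 1) := Real.sqrt_pos.mpr (by linarith)
  have hZ0 : 0 < Z := by positivity
  set σ : ℝ := min 1 (δ / (2 * (1 + CK))) with hσ
  have hσ0 : 0 < σ := lt_min one_pos (by positivity)
  refine ⟨Z, hZ0, σ, ⟨hσ0, min_le_left _ _⟩, ?_⟩
  intro x hxU hxσ
  -- decomposition x - xinf = k + ξ
  set k : X := (pK (x - xinf) : X) with hkdef
  have hkK : k ∈ K := (pK (x - xinf)).2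
  set ξ : X := (x - xinf) - k with hξdef
  have hξX₀ : ξ ∈ X₀ := by
    have := Submodule.projection_add_projection_eq_self hX₀compl (x - xinf)
    have h2 : ((X₀.linearProjOfIsCompl K hX₀compl.symm (x - xinf)) : X) = ξ := by
      rw [hξdef, hkdef]
      have hco : ((K.linearProjOfIsCompl X₀ hX₀compl (x - xinf)) : X) = (pK (x - xinf) : X) := by
        rw [hpK]
        rw [Submodule.coe_continuous_linearProjOfClosedCompl']
        rfl
      rw [← hco]
      exact eq_sub_of_add_eq' this
    rw [← h2]; exact (X₀.linearProjOfIsCompl K hX₀compl.symm (x - xinf)).2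
  have hknorm : ‖k‖ ≤ CK * ‖x - xinf‖ := by
    simpa [hkdef, hCK] using (K.subtypeL.comp pK).le_opNorm (x - xinf)
  have hξnorm : ‖ξ‖ ≤ (1 + CK) * ‖x - xinf‖ := by
    calc ‖ξ‖ ≤ ‖x - xinf‖ + ‖k‖ := norm_sub_le _ _
      _ ≤ (1 + CK) * ‖x - xinf‖ := by nlinarith [norm_nonneg (x - xinf)]
  have hsum : ‖k‖ + ‖ξ‖ < δ := by
    have h2 : ‖x - xinf‖ < δ / (2 * (1 + CK)) := lt_of_lt_of_le hxσ (min_le_right _ _)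
    have h2' : ‖x - xinf‖ * (2 * (1 + CK)) < δ := by
      rw [← lt_div_iff₀ (by positivity)]; exact h2
    nlinarith [norm_nonneg (x - xinf), norm_nonneg k, norm_nonneg ξ]
  have hball : ∀ w : X, ‖w‖ ≤ ‖k‖ + ‖ξ‖ → xinf + w ∈ Metric.ball xinf δ := by
    intro w hw
    simp only [Metric.mem_ball, dist_eq_norm, add_sub_cancel_left]
    exact lt_of_le_of_lt hw hsum
  set y : ℝ → X := fun t => (xinf + k) + t • ξ with hy
  have hymem : ∀ t ∈ Icc (0:ℝ) 1, y t ∈ Metric.ball xinf δ := by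
    intro t ht
    have heq : y t = xinf + (k + t • ξ) := by rw [hy]; simp only; rw [add_assoc]
    rw [heq]
    apply hball
    have h1 : ‖t • ξ‖ = |t| * ‖ξ‖ := by rw [norm_smul, Real.norm_eq_abs]
    have h2 : |t| ≤ 1 := abs_le.mpr ⟨by linarith [ht.1], ht.2⟩
    calc ‖k + t • ξ‖ ≤ ‖k‖ + ‖t • ξ‖ := norm_add_le _ _
      _ ≤ ‖k‖ + ‖ξ‖ := by rw [h1]; nlinarith [norm_nonneg ξ]
  have hymemU : ∀ t ∈ Icc (0:ℝ) 1, y t ∈ U := fun t ht => hballU (hymem t ht)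
  have hy1 : y 1 = x := by rw [hy]; simp only [one_smul, hξdef]; abel
  have hy0 : y 0 = xinf + k := by rw [hy]; simp
  have hMdiff : ∀ z ∈ U, HasFDerivAt M (fderiv ℝ M z) z := fun z hz =>
    ((hM.differentiableOn one_ne_zero z hz).differentiableAt (hUopen.mem_nhds hz)).hasFDerivAt
  have hEdiff : ∀ z ∈ U, HasFDerivAt E (fderiv ℝ E z) z := fun z hz =>
    ((hE.differentiableOn (by norm_num) z hz).differentiableAt (hUopen.mem_nhds hz)).hasFDerivAt
  have hyderiv : ∀ t : ℝ, HasDerivAt y ξ t := by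
    intro t
    have h1 : HasDerivAt (fun t : ℝ => t • ξ) ξ t := by
      simpa using (hasDerivAt_id t).smul_const ξ
    simpa [hy] using h1.const_add (xinf + k)
  have hgderiv : ∀ t ∈ Icc (0:ℝ) 1,
      HasDerivAt (fun s => jYH (M (y s))) (M₁ (y t) (jXG ξ)) t := by
    intro t ht
    have h2 : HasDerivAt (fun s => M (y s)) (fderiv ℝ M (y t) ξ) t :=
      (hMdiff (y t) (hymemU t ht)).comp_hasDerivAt t (hyderiv t)
    have h3 : HasDerivAt (fun s => jYH (M (y s))) (jYH (fderiv ℝ M (y t) ξ)) t :=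
      jYH.hasFDerivAt.comp_hasDerivAt t h2
    rwa [← hExt (y t) (hymemU t ht) ξ] at h3
  have hcU : xinf + k ∈ U := hballU (hball k (by linarith [norm_nonneg ξ]))
  have hcrit' : fderiv ℝ E (xinf + k) = 0 := (hMB _ hcU).mpr (by simpa using hkK)
  have hMc0 : jYH (M (xinf + k)) = 0 := by
    have hφ : (jHG (jYH (M (xinf + k)))).comp jXG = ((0 : G →L[ℝ] ℝ)).comp jXG := by
      ext v
      have h := hgrad (xinf + k) hcU v
      rw [hcrit'] at h
      simpa using h.symm
    have h0 : jHG (jYH (M (xinf + k))) = 0 := hTransInj hφ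
    apply hjHG
    rw [h0, map_zero]
  set r : ℝ := ‖jXG ξ‖ with hr
  have hr0 : 0 ≤ r := norm_nonneg _
  have hμr : μ * r ≤ ‖M₁ xinf (jXG ξ)‖ := hμ _ (hX₀G₀ ξ hξX₀)
  have hlow : ‖jYH (M x) - M₁ xinf (jXG ξ)‖ ≤ (μ/2) * r := by
    have hderivh : ∀ t ∈ Icc (0:ℝ) 1, HasDerivWithinAt
        (fun s => jYH (M (y s)) - s • (M₁ xinf (jXG ξ)))
        (M₁ (y t) (jXG ξ) - M₁ xinf (jXG ξ)) (Icc 0 1) t := by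
      intro t ht
      have hs : HasDerivAt (fun s : ℝ => s • (M₁ xinf (jXG ξ))) (M₁ xinf (jXG ξ)) t := by
        simpa using (hasDerivAt_id t).smul_const (M₁ xinf (jXG ξ))
      exact ((hgderiv t ht).sub hs).hasDerivWithinAt
    have hbound : ∀ t ∈ Ico (0:ℝ) 1,
        ‖M₁ (y t) (jXG ξ) - M₁ xinf (jXG ξ)‖ ≤ (μ/2) * r := by
      intro t ht
      have h1 : M₁ (y t) (jXG ξ) - M₁ xinf (jXG ξ) = (M₁ (y t) - M₁ xinf) (jXG ξ) := by simp
      rw [h1]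
      calc ‖(M₁ (y t) - M₁ xinf) (jXG ξ)‖ ≤ ‖M₁ (y t) - M₁ xinf‖ * r :=
            (M₁ (y t) - M₁ xinf).le_opNorm _
        _ ≤ (μ/2) * r := mul_le_mul_of_nonneg_right
            (hM₁close _ (hymem t (Ico_subset_Icc_self ht))) hr0
    have := norm_image_sub_le_of_norm_deriv_le_segment_01' hderivh hbound
    simpa [hy0, hy1, hMc0] using this
  have hlow2 : (μ/2) * r ≤ ‖jYH (M x)‖ := by
    have h1 : ‖M₁ xinf (jXG ξ)‖ - ‖jYH (M x)‖ ≤ ‖jYH (M x) - M₁ xinf (jXG ξ)‖ := by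
      rw [norm_sub_rev]; exact norm_sub_norm_le _ _
    linarith
  have hgbound : ∀ t ∈ Icc (0:ℝ) 1, ‖jYH (M (y t))‖ ≤ CB * r := by
    intro t ht
    have hsub : Icc (0:ℝ) t ⊆ Icc 0 1 := Icc_subset_Icc le_rfl ht.2
    have hd : ∀ s ∈ Icc (0:ℝ) t, HasDerivWithinAt (fun s => jYH (M (y s)))
        (M₁ (y s) (jXG ξ)) (Icc 0 t) s :=
      fun s hs => (hgderiv s (hsub hs)).hasDerivWithinAt
    have hb : ∀ s ∈ Ico (0:ℝ) t, ‖M₁ (y s) (jXG ξ)‖ ≤ CB * r := by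
      intro s hs
      have hsI : s ∈ Icc (0:ℝ) 1 := hsub (Ico_subset_Icc_self hs)
      calc ‖M₁ (y s) (jXG ξ)‖ ≤ ‖M₁ (y s)‖ * r := (M₁ (y s)).le_opNorm _
        _ ≤ CB * r := by
          apply mul_le_mul_of_nonneg_right _ hr0
          have h2 : ‖M₁ (y s)‖ = ‖M₁ xinf + (M₁ (y s) - M₁ xinf)‖ := by rw [add_sub_cancel]
          calc ‖M₁ (y s)‖ ≤ ‖M₁ xinf‖ + ‖M₁ (y s) - M₁ xinf‖ := by
                rw [h2]; exact norm_add_le _ _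
            _ ≤ CB := by
                have := hM₁close _ (hymem s hsI)
                rw [hCB]; linarith
    have := norm_image_sub_le_of_norm_deriv_le_segment' hd hb t (right_mem_Icc.2 ht.1)
    have h0 : jYH (M (y 0)) = 0 := by rw [hy0]; exact hMc0
    rw [h0, sub_zero, sub_zero] at this
    refine le_trans this ?_
    exact mul_le_of_le_one_right (mul_nonneg hCB0 hr0) ht.2
  have hEbound : |E x - E (xinf + k)| ≤ D * r ^ 2 := by
    have hφderiv : ∀ t ∈ Icc (0:ℝ) 1, HasDerivWithinAt (fun s => E (y s))
        (jHG (jYH (M (y t))) (jXG ξ)) (Icc 0 1) t := by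
      intro t ht
      have h1 : HasDerivAt (fun s => E (y s)) (fderiv ℝ E (y t) ξ) t :=
        (hEdiff (y t) (hymemU t ht)).comp_hasDerivAt t (hyderiv t)
      rw [hgrad (y t) (hymemU t ht) ξ] at h1
      exact h1.hasDerivWithinAt
    have hb : ∀ t ∈ Ico (0:ℝ) 1, ‖jHG (jYH (M (y t))) (jXG ξ)‖ ≤ D * r ^ 2 := by
      intro t ht
      have htI : t ∈ Icc (0:ℝ) 1 := Ico_subset_Icc_self ht
      calc ‖jHG (jYH (M (y t))) (jXG ξ)‖ ≤ ‖jHG (jYH (M (y t)))‖ * r :=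
            (jHG (jYH (M (y t)))).le_opNorm _
        _ ≤ (‖jHG‖ * ‖jYH (M (y t))‖) * r :=
            mul_le_mul_of_nonneg_right (jHG.le_opNorm _) hr0
        _ ≤ (‖jHG‖ * (CB * r)) * r :=
            mul_le_mul_of_nonneg_right
              (mul_le_mul_of_nonneg_left (hgbound t htI) jHG.opNorm_nonneg) hr0
        _ = D * r ^ 2 := by rw [hD]; ring
    have := norm_image_sub_le_of_norm_deriv_le_segment_01' hφderiv hb
    rw [hy0, hy1] at this
    simpa [Real.norm_eq_abs] using this
  have hψ : E (xinf + k) = E xinf := by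
    have hmem : ∀ t ∈ Icc (0:ℝ) 1, xinf + t • k ∈ U := by
      intro t ht
      apply hballU; apply hball
      have h1 : ‖t • k‖ = |t| * ‖k‖ := by rw [norm_smul, Real.norm_eq_abs]
      have h2 : |t| ≤ 1 := abs_le.mpr ⟨by linarith [ht.1], ht.2⟩
      rw [h1]; nlinarith [norm_nonneg k, norm_nonneg ξ]
    have hd : ∀ t ∈ Icc (0:ℝ) 1,
        HasDerivWithinAt (fun s => E (xinf + s • k)) (0:ℝ) (Icc 0 1) t := by
      intro t ht
      have hyk : HasDerivAt (fun s : ℝ => xinf + s • k) k t := by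
        simpa using ((hasDerivAt_id t).smul_const k).const_add xinf
      have h1 : HasDerivAt (fun s => E (xinf + s • k)) (fderiv ℝ E (xinf + t • k) k) t :=
        (hEdiff _ (hmem t ht)).comp_hasDerivAt t hyk
      have h0 : fderiv ℝ E (xinf + t • k) = 0 :=
        (hMB _ (hmem t ht)).mpr (by simpa using K.smul_mem t hkK)
      rw [h0] at h1
      simpa using h1.hasDerivWithinAt
    have := norm_image_sub_le_of_norm_deriv_le_segment_01' (C := 0) hd (fun t _ => by simp)
    simp only [one_smul, zero_smul, add_zero] at this
    have h0 : E (xinf + k) - E xinf = 0 := by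
      have := norm_le_zero_iff.mp this
      exact this
    linarith
  have hfin : |E x - E xinf| ≤ (D + 1) * r ^ 2 := by
    have h1 : |E x - E xinf| ≤ D * r ^ 2 := by rw [← hψ]; exact hEbound
    nlinarith [sq_nonneg r]
  have hsq : Real.sqrt |E x - E xinf| ≤ Real.sqrt (D + 1) * r := by
    have h1 : Real.sqrt |E x - E xinf| ≤ Real.sqrt ((D + 1) * r ^ 2) :=
      Real.sqrt_le_sqrt hfin
    rwa [Real.sqrt_mul (by linarith) (r ^ 2), Real.sqrt_sq hr0] at h1
  have hZs : Z * Real.sqrt (D + 1) = μ / 2 := by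
    rw [hZ]; field_simp
  calc ‖jYH (M x)‖ ≥ (μ/2) * r := hlow2
    _ = Z * (Real.sqrt (D + 1) * r) := by rw [← mul_assoc, hZs]
    _ ≥ Z * Real.sqrt |E x - E xinf| := mul_le_mul_of_nonneg_left hsq hZ0.le
end

section
/- Łojasiewicz–Simon gradient inequality for C² Morse–Bott functions, case G = X and H = Y (Corollary 2 of the paper, straightened form). Let X and Y be real Banach spaces with a continuous embedding Y ⊂ X*. Let U ⊂ X be an open convex subset, let E : U → ℝ be a C² function, let x∞ ∈ U be a critical point of E (E'(x∞) = 0), and let M : U → Y be a C¹ gradient map for E. Set K := ker E''(x∞) (the kernel of the bounded operator E''(x∞) : X → X*), and assume E is Morse–Bott at x∞ in the straightened sense that Crit E ∩ U = (x∞ + K) ∩ U. Assume that K has a closed complement in X and that the range of M'(x∞) : X → Y is a closed subspace of Y. Then there exist constants Z > 0 and σ ∈ (0,1] such that every x ∈ U with ‖x − x∞‖_X < σ satisfies ‖M(x)‖_Y ≥ Z · |E(x) − E(x∞)|^{1/2}. -/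
open Set

set_option maxHeartbeats 1000000
set_option synthInstance.maxHeartbeats 400000

/-- **Łojasiewicz–Simon gradient inequality for C² Morse–Bott functions, case `G = X`,
`H = Y`** (Corollary 2 of the paper, straightened form).  `X` and `Y` are real Banach spaces
with a continuous embedding `Y ⊂ X*` (via `jY`), `U ⊂ X` is open and convex, `E : U → ℝ` is
`C²` with critical point `xinf ∈ U`, and `M : U → Y` is a `C¹` gradient map for `E`.  `E` is
Morse–Bott at `xinf` in the straightened sense `Crit E ∩ U = (xinf + K) ∩ U` with
`K = ker E''(xinf)`, `K` has a closed complement in `X`, and `ran M'(xinf)` is closed in `Y`.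
Then `‖M(x)‖_Y ≥ Z |E(x) − E(xinf)|^{1/2}` for all `x ∈ U` with `‖x − xinf‖_X < σ`. -/
theorem lojasiewicz_simon_gradient_inequality_morse_bott_GisX
    {X Y : Type*}
    [NormedAddCommGroup X] [NormedSpace ℝ X] [CompleteSpace X]
    [NormedAddCommGroup Y] [NormedSpace ℝ Y] [CompleteSpace Y]
    -- continuous embedding Y ⊂ X*
    (jY : Y →L[ℝ] (X →L[ℝ] ℝ)) (hjY : Function.Injective jY)
    -- open convex domain
    {U : Set X} (hUopen : IsOpen U) (hUconv : Convex ℝ U)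
    -- E is C² on U with critical point xinf ∈ U
    (E : X → ℝ) (hE : ContDiffOn ℝ 2 E U)
    (xinf : X) (hxinf : xinf ∈ U) (hcrit : fderiv ℝ E xinf = 0)
    -- M is a C¹ gradient map for E
    (M : X → Y) (hM : ContDiffOn ℝ 1 M U)
    (hgrad : ∀ x ∈ U, ∀ v : X, fderiv ℝ E x v = jY (M x) v)
    -- E is Morse–Bott at xinf in the straightened sense, K = ker E''(xinf)
    (hMB : ∀ x ∈ U, fderiv ℝ E x = 0 ↔
      x - xinf ∈ LinearMap.ker (fderiv ℝ (fderiv ℝ E) xinf : X →ₗ[ℝ] (X →L[ℝ] ℝ)))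
    -- K has a closed complement X₀ in X
    (X₀ : Submodule ℝ X) (hX₀closed : IsClosed (X₀ : Set X))
    (hX₀compl : IsCompl (LinearMap.ker (fderiv ℝ (fderiv ℝ E) xinf : X →ₗ[ℝ] (X →L[ℝ] ℝ))) X₀)
    -- the range of M'(xinf) : X → Y is closed in Y
    (hRange : IsClosed ((LinearMap.range (fderiv ℝ M xinf : X →ₗ[ℝ] Y)) : Set Y)) :
    ∃ Z : ℝ, 0 < Z ∧ ∃ σ ∈ Ioc (0 : ℝ) 1, ∀ x ∈ U, ‖x - xinf‖ < σ →
      ‖M x‖ ≥ Z * Real.sqrt |E x - E xinf| := by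
  classical
  set K : Submodule ℝ X := LinearMap.ker (fderiv ℝ (fderiv ℝ E) xinf : X →ₗ[ℝ] (X →L[ℝ] ℝ)) with hKdef
  set A : X →L[ℝ] Y := fderiv ℝ M xinf with hAdef
  have hKclosed : IsClosed (K : Set X) := ContinuousLinearMap.isClosed_ker _
  -- the continuous projection onto X₀ along K
  set P : X →L[ℝ] X₀ :=
    X₀.linearProjOfClosedCompl K hX₀compl.symm hX₀closed hKclosed with hPdef
  have hPk : ∀ v : X, v - (P v : X) ∈ K := by
    intro v
    have h : (X₀.projectionOnto K hX₀compl.symm v : X) + (K.projectionOnto X₀ hX₀compl v : X) = v :=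
      Submodule.projection_add_projection_eq_self hX₀compl.symm v
    have hc : (P v : X) = (X₀.projectionOnto K hX₀compl.symm v : X) := by
      simp [hPdef, Submodule.coe_continuous_linearProjOfClosedCompl']
    rw [hc]
    have h2 : v - (X₀.projectionOnto K hX₀compl.symm v : X)
        = (K.projectionOnto X₀ hX₀compl v : X) := by
      have h3 := h
      linear_combination (norm := abel) -h3
    rw [h2]; exact (K.projectionOnto X₀ hX₀compl v).2
  -- E' = jY ∘ M on U
  have hEq : ∀ z ∈ U, fderiv ℝ E z = jY (M z) := fun z hz =>
    ContinuousLinearMap.ext fun v => hgrad z hz v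
  -- differentiability facts
  have hEfd : ContDiffOn ℝ 1 (fderiv ℝ E) U := by
    have := hE.fderiv_of_isOpen hUopen (m := 1) (by norm_num)
    exact this
  have hMdiffAt : ∀ z ∈ U, DifferentiableAt ℝ M z := fun z hz =>
    ((hM.differentiableOn one_ne_zero).differentiableAt (hUopen.mem_nhds hz))
  have hEdiffAt : ∀ z ∈ U, DifferentiableAt ℝ E z := fun z hz =>
    ((hE.differentiableOn (by norm_num)).differentiableAt (hUopen.mem_nhds hz))
  have hE'diffAt : ∀ z ∈ U, DifferentiableAt ℝ (fderiv ℝ E) z := fun z hz =>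
    ((hEfd.differentiableOn one_ne_zero).differentiableAt (hUopen.mem_nhds hz))
  -- E''(xinf) = jY ∘ A
  have hDcomp : fderiv ℝ (fderiv ℝ E) xinf = jY.comp A := by
    have hev : fderiv ℝ E =ᶠ[nhds xinf] fun z => jY (M z) :=
      Filter.eventually_of_mem (hUopen.mem_nhds hxinf) hEq
    rw [hev.fderiv_eq]
    exact (jY.hasFDerivAt.comp xinf (hMdiffAt xinf hxinf).hasFDerivAt).fderiv
  -- kernel of A is K
  have hkerA : ∀ v : X, A v = 0 ↔ v ∈ K := by
    intro v
    constructor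
    · intro h
      have : (fderiv ℝ (fderiv ℝ E) xinf) v = 0 := by
        rw [hDcomp]; simp [h]
      exact LinearMap.mem_ker.2 this
    · intro h
      have h0 : (fderiv ℝ (fderiv ℝ E) xinf) v = 0 := LinearMap.mem_ker.1 h
      rw [hDcomp] at h0
      exact hjY (by simpa using h0)
  -- A is bounded below on X₀
  letI : CompleteSpace X₀ := hX₀closed.completeSpace_coe
  letI : CompleteSpace (LinearMap.range (A : X →ₗ[ℝ] Y)) := hRange.completeSpace_coe
  have hmemrange : ∀ ξ : X₀, (A.comp X₀.subtypeL) ξ ∈ LinearMap.range (A : X →ₗ[ℝ] Y) := fun ξ =>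
    LinearMap.mem_range_self _ _
  set φ : X₀ →L[ℝ] (LinearMap.range (A : X →ₗ[ℝ] Y)) :=
    (A.comp X₀.subtypeL).codRestrict (LinearMap.range (A : X →ₗ[ℝ] Y)) hmemrange with hφdef
  have hφinj : LinearMap.ker (φ : X₀ →ₗ[ℝ] (LinearMap.range (A : X →ₗ[ℝ] Y))) = ⊥ := by
    rw [LinearMap.ker_eq_bot']
    intro ξ h
    have h' : A (ξ : X) = 0 := congrArg Subtype.val h
    have hK' : (ξ : X) ∈ K := (hkerA _).1 h'
    have hz : (ξ : X) = 0 :=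
      (Submodule.disjoint_def.1 hX₀compl.disjoint) _ hK' ξ.2
    exact Subtype.ext hz
  have hφsurj : LinearMap.range (φ : X₀ →ₗ[ℝ] (LinearMap.range (A : X →ₗ[ℝ] Y))) = ⊤ := by
    apply LinearMap.range_eq_top_of_surjective
    rintro ⟨y, v, rfl⟩
    refine ⟨P v, Subtype.ext ?_⟩
    have hAv : A ((P v : X)) = A v := by
      have h4 := map_sub A v ((P v : X))
      rw [(hkerA _).2 (hPk v), eq_comm, sub_eq_zero] at h4
      exact h4.symm
    exact hAv
  set e : X₀ ≃L[ℝ] (LinearMap.range (A : X →ₗ[ℝ] Y)) :=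
    ContinuousLinearEquiv.ofBijective φ hφinj hφsurj with hedef
  set c : ℝ := (‖(e.symm : (LinearMap.range (A : X →ₗ[ℝ] Y)) →L[ℝ] X₀)‖ + 1)⁻¹ with hcdef
  have hcpos : 0 < c := by
    apply inv_pos.2
    positivity
  have hAlow : ∀ ξ : X₀, c * ‖(ξ : X)‖ ≤ ‖A (ξ : X)‖ := by
    intro ξ
    have h1 : ‖ξ‖ ≤ ‖(e.symm : (LinearMap.range (A : X →ₗ[ℝ] Y)) →L[ℝ] X₀)‖ * ‖e ξ‖ := by
      conv_lhs => rw [← e.symm_apply_apply ξ]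
      exact ContinuousLinearMap.le_opNorm (e.symm : (LinearMap.range (A : X →ₗ[ℝ] Y)) →L[ℝ] X₀) (e ξ)
    have heφ : e ξ = φ ξ := by
      simp only [hedef, ContinuousLinearEquiv.coeFn_ofBijective]
    have heξ : ‖e ξ‖ = ‖A (ξ : X)‖ := by
      rw [heφ, ← Submodule.norm_coe]
      rfl
    rw [heξ] at h1
    have hn : ‖(ξ : X)‖ = ‖ξ‖ := rfl
    have hpos : (0:ℝ) < ‖(e.symm : (LinearMap.range (A : X →ₗ[ℝ] Y)) →L[ℝ] X₀)‖ + 1 := by positivity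
    rw [hn, hcdef, inv_mul_le_iff₀ hpos]
    nlinarith [norm_nonneg (A (ξ : X))]
  -- choice of radius r
  set C₂ : ℝ := ‖fderiv ℝ (fderiv ℝ E) xinf‖ + 1 with hC₂def
  have hC₂pos : 0 < C₂ := by positivity
  have hcontD : ContinuousOn (fderiv ℝ (fderiv ℝ E)) U :=
    hEfd.continuousOn_fderiv_of_isOpen hUopen le_rfl
  have hcontM : ContinuousOn (fderiv ℝ M) U :=
    hM.continuousOn_fderiv_of_isOpen hUopen le_rfl
  have hDat : ContinuousAt (fderiv ℝ (fderiv ℝ E)) xinf :=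
    hcontD.continuousAt (hUopen.mem_nhds hxinf)
  have hMat : ContinuousAt (fderiv ℝ M) xinf :=
    hcontM.continuousAt (hUopen.mem_nhds hxinf)
  obtain ⟨δ₁, hδ₁pos, hδ₁⟩ := (@Metric.continuousAt_iff X (X →L[ℝ] X →L[ℝ] ℝ) _ _ _ _).1 (by exact hDat) 1 one_pos
  obtain ⟨δ₂, hδ₂pos, hδ₂⟩ := (Metric.continuousAt_iff (f := fderiv ℝ M)).1 hMat (c/2) (by positivity)
  obtain ⟨δ₀, hδ₀pos, hδ₀⟩ := Metric.isOpen_iff.1 hUopen xinf hxinf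
  set r : ℝ := min δ₀ (min δ₁ δ₂) / 2 with hrdef
  have hrpos : 0 < r := by positivity
  have hrδ₀ : r < δ₀ := by
    have h1 : min δ₀ (min δ₁ δ₂) ≤ δ₀ := min_le_left _ _
    rw [hrdef]; linarith
  have hrδ₁ : r < δ₁ := by
    have h1 : min δ₀ (min δ₁ δ₂) ≤ δ₁ := le_trans (min_le_right _ _) (min_le_left _ _)
    rw [hrdef]; linarith
  have hrδ₂ : r < δ₂ := by
    have h1 : min δ₀ (min δ₁ δ₂) ≤ δ₂ := le_trans (min_le_right _ _) (min_le_right _ _)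
    rw [hrdef]; linarith
  have hball : Metric.closedBall xinf r ⊆ U := fun z hz => hδ₀ (by
    have h1 := Metric.mem_closedBall.1 hz
    exact Metric.mem_ball.2 (lt_of_le_of_lt h1 hrδ₀))
  have hDbound : ∀ z ∈ Metric.closedBall xinf r, ‖fderiv ℝ (fderiv ℝ E) z‖ ≤ C₂ := by
    intro z hz
    have h1 : dist z xinf < δ₁ := lt_of_le_of_lt (Metric.mem_closedBall.1 hz) hrδ₁
    have h2 := hδ₁ h1
    replace h2 : ‖fderiv ℝ (fderiv ℝ E) z - fderiv ℝ (fderiv ℝ E) xinf‖ < 1 := (dist_eq_norm (fderiv ℝ (fderiv ℝ E) z) (fderiv ℝ (fderiv ℝ E) xinf)) ▸ h2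
    have h3 := norm_sub_norm_le (fderiv ℝ (fderiv ℝ E) z) (fderiv ℝ (fderiv ℝ E) xinf)
    rw [hC₂def]; linarith
  have hMbound : ∀ z ∈ Metric.closedBall xinf r, ‖fderiv ℝ M z - A‖ ≤ c / 2 := by
    intro z hz
    have h1 : dist z xinf < δ₂ := lt_of_le_of_lt (Metric.mem_closedBall.1 hz) hrδ₂
    have h2 := hδ₂ h1
    rw [dist_eq_norm] at h2
    exact h2.le
  -- the constants
  have hsqC₂ : 0 < Real.sqrt C₂ := Real.sqrt_pos.2 hC₂pos
  set NP : ℝ := 1 + 2 * ‖P‖ with hNPdef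
  have hNPpos : 0 < NP := by positivity
  set σ : ℝ := min 1 (r / NP) with hσdef
  refine ⟨c / (2 * Real.sqrt C₂), by positivity, σ,
    ⟨lt_min one_pos (by positivity), min_le_left _ _⟩, ?_⟩
  intro x hxU hxσ
  set v : X := x - xinf with hv
  set ξ : X := ((P v : X₀) : X) with hξ
  set k : X := v - ξ with hk
  have hkK : k ∈ K := hPk v
  set y₀ : X := xinf + k with hy₀
  have hxy₀ : x - y₀ = ξ := by rw [hy₀, hk, hv]; abel
  have hξnorm : ‖ξ‖ ≤ ‖P‖ * ‖v‖ := by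
    rw [hξ, Submodule.norm_coe]
    exact P.le_opNorm v
  have hknorm : ‖k‖ ≤ (1 + ‖P‖) * ‖v‖ := by
    have h1 := norm_sub_le v ξ
    rw [hk]
    have h2 : ‖v‖ + ‖ξ‖ ≤ ‖v‖ + ‖P‖ * ‖v‖ := by linarith
    calc ‖v - ξ‖ ≤ ‖v‖ + ‖ξ‖ := h1
      _ ≤ ‖v‖ + ‖P‖ * ‖v‖ := h2
      _ = (1 + ‖P‖) * ‖v‖ := by ring
  have hvσ : ‖v‖ < σ := hxσ
  have hvr : NP * ‖v‖ < r := by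
    have h1 : ‖v‖ < r / NP := lt_of_lt_of_le hvσ (min_le_right _ _)
    calc NP * ‖v‖ < NP * (r / NP) := by exact mul_lt_mul_of_pos_left h1 hNPpos
      _ = r := by field_simp
  have hPnn : (0:ℝ) ≤ ‖P‖ := ContinuousLinearMap.opNorm_nonneg P
  have hvnn : (0:ℝ) ≤ ‖v‖ := norm_nonneg _
  have hNP1 : (1:ℝ) ≤ NP := by rw [hNPdef]; linarith
  have hxball : x ∈ Metric.closedBall xinf r := by
    rw [Metric.mem_closedBall, dist_eq_norm, ← hv]
    calc ‖v‖ = 1 * ‖v‖ := (one_mul _).symm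
      _ ≤ NP * ‖v‖ := mul_le_mul_of_nonneg_right hNP1 hvnn
      _ ≤ r := hvr.le
  have hy₀ball : y₀ ∈ Metric.closedBall xinf r := by
    rw [Metric.mem_closedBall, dist_eq_norm]
    have h1 : y₀ - xinf = k := by rw [hy₀]; abel
    rw [h1]
    calc ‖k‖ ≤ (1 + ‖P‖) * ‖v‖ := hknorm
      _ ≤ NP * ‖v‖ := mul_le_mul_of_nonneg_right (by rw [hNPdef]; linarith) hvnn
      _ ≤ r := hvr.le
  have hy₀U : y₀ ∈ U := hball hy₀ball
  -- y₀ is a critical point with the same value of E, and M y₀ = 0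
  have hEy₀' : fderiv ℝ E y₀ = 0 := by
    apply (hMB y₀ hy₀U).2
    have h1 : y₀ - xinf = k := by rw [hy₀]; abel
    rw [h1]; exact hkK
  have hMy₀ : M y₀ = 0 := by
    apply hjY
    rw [map_zero, ← hEq y₀ hy₀U]
    exact hEy₀'
  have hEy₀val : E y₀ = E xinf := by
    have hseg : segment ℝ xinf y₀ ⊆ Metric.closedBall xinf r :=
      (convex_closedBall xinf r).segment_subset (Metric.mem_closedBall_self hrpos.le) hy₀ball
    have hbound : ∀ z ∈ segment ℝ xinf y₀, ‖fderiv ℝ E z‖ ≤ 0 := by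
      intro z hz
      have hzU : z ∈ U := hball (hseg hz)
      rw [segment_eq_image'] at hz
      obtain ⟨t, ht, rfl⟩ := hz
      have h1 : (xinf + t • (y₀ - xinf)) - xinf ∈ K := by
        have h2 : (xinf + t • (y₀ - xinf)) - xinf = t • k := by
          rw [hy₀, add_sub_cancel_left, add_sub_cancel_left]
        rw [h2]; exact K.smul_mem t hkK
      have h3 : fderiv ℝ E (xinf + t • (y₀ - xinf)) = 0 := (hMB _ hzU).2 h1
      rw [h3]; simp
    have h4 : ‖E y₀ - E xinf‖ ≤ 0 * ‖y₀ - xinf‖ :=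
      Convex.norm_image_sub_le_of_norm_fderiv_le
        (fun z hz => hEdiffAt z (hball (hseg hz))) hbound (convex_segment xinf y₀)
        (left_mem_segment ℝ xinf y₀) (right_mem_segment ℝ xinf y₀)
    rw [zero_mul] at h4
    have h5 : E y₀ - E xinf = 0 := norm_le_zero_iff.1 h4
    linarith
  -- bound on E' on the segment from y₀ to x
  have hsegx : segment ℝ y₀ x ⊆ Metric.closedBall xinf r :=
    (convex_closedBall xinf r).segment_subset hy₀ball hxball
  have hE'bound : ∀ z ∈ segment ℝ y₀ x, ‖fderiv ℝ E z‖ ≤ C₂ * ‖ξ‖ := by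
    intro z hz
    have hzball := hsegx hz
    have h1 : ‖fderiv ℝ E z - fderiv ℝ E y₀‖ ≤ C₂ * ‖z - y₀‖ :=
      Convex.norm_image_sub_le_of_norm_fderiv_le
        (fun w hw => hE'diffAt w (hball hw)) hDbound (convex_closedBall xinf r)
        hy₀ball hzball
    rw [hEy₀', sub_zero] at h1
    have hzy : ‖z - y₀‖ ≤ ‖ξ‖ := by
      rw [segment_eq_image'] at hz
      obtain ⟨t, ht, rfl⟩ := hz
      have h2 : (y₀ + t • (x - y₀)) - y₀ = t • ξ := by rw [← hxy₀]; abel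
      rw [h2, norm_smul, Real.norm_eq_abs]
      have h3 : |t| ≤ 1 := abs_le.2 ⟨by linarith [ht.1], ht.2⟩
      exact mul_le_of_le_one_left (norm_nonneg ξ) h3
    exact h1.trans (mul_le_mul_of_nonneg_left hzy hC₂pos.le)
  -- quadratic bound on E
  have hEx : |E x - E xinf| ≤ C₂ * (‖ξ‖ * ‖ξ‖) := by
    have h1 : ‖E x - E y₀‖ ≤ (C₂ * ‖ξ‖) * ‖x - y₀‖ :=
      Convex.norm_image_sub_le_of_norm_fderiv_le
        (fun z hz => hEdiffAt z (hball (hsegx hz))) hE'bound (convex_segment y₀ x)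
        (left_mem_segment ℝ y₀ x) (right_mem_segment ℝ y₀ x)
    rw [hxy₀] at h1
    rw [← hEy₀val]
    calc |E x - E y₀| = ‖E x - E y₀‖ := (Real.norm_eq_abs _).symm
      _ ≤ (C₂ * ‖ξ‖) * ‖ξ‖ := h1
      _ = C₂ * (‖ξ‖ * ‖ξ‖) := by ring
  -- linear lower bound on M
  have hMA : ‖M x - A ξ‖ ≤ (c / 2) * ‖ξ‖ := by
    have h1 : ∀ z ∈ Metric.closedBall xinf r,
        HasFDerivWithinAt (fun w => M w - A w) (fderiv ℝ M z - A)
          (Metric.closedBall xinf r) z := fun z hz =>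
      (((hMdiffAt z (hball hz)).hasFDerivAt).sub A.hasFDerivAt).hasFDerivWithinAt
    have h2 : ‖(M x - A x) - (M y₀ - A y₀)‖ ≤ (c / 2) * ‖x - y₀‖ :=
      Convex.norm_image_sub_le_of_norm_hasFDerivWithin_le h1 hMbound
        (convex_closedBall xinf r) hy₀ball hxball
    have h3 : (M x - A x) - (M y₀ - A y₀) = M x - A ξ := by
      rw [hMy₀, ← hxy₀, map_sub]; abel
    rw [h3, hxy₀] at h2
    exact h2
  have hAξ : c * ‖ξ‖ ≤ ‖A ξ‖ := hAlow (P v)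
  have hMlow : (c / 2) * ‖ξ‖ ≤ ‖M x‖ := by
    have h1 := norm_sub_norm_le (A ξ) (M x)
    rw [norm_sub_rev] at h1
    linarith
  -- conclusion
  have hsqrt : Real.sqrt |E x - E xinf| ≤ Real.sqrt C₂ * ‖ξ‖ := by
    have h0 : Real.sqrt |E x - E xinf| ≤ Real.sqrt (C₂ * (‖ξ‖ * ‖ξ‖)) :=
      Real.sqrt_le_sqrt hEx
    have h1 : Real.sqrt (C₂ * (‖ξ‖ * ‖ξ‖)) = Real.sqrt C₂ * ‖ξ‖ := by
      rw [Real.sqrt_mul hC₂pos.le, Real.sqrt_mul_self (norm_nonneg ξ)]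
    linarith
  rw [ge_iff_le]
  calc c / (2 * Real.sqrt C₂) * Real.sqrt |E x - E xinf|
      ≤ c / (2 * Real.sqrt C₂) * (Real.sqrt C₂ * ‖ξ‖) :=
        mul_le_mul_of_nonneg_left hsqrt (by positivity)
    _ = (c / 2) * ‖ξ‖ := by field_simp
    _ ≤ ‖M x‖ := hMlow
end

section
/- Energy upper bound in the proof of the Morse–Bott Łojasiewicz–Simon theorem. Let X, G, Y, H be real Banach spaces with continuous embeddings X ⊂ G and Y ⊂ H ⊂ G* ⊂ X*, where the embedding G* ⊂ X* is the transpose (adjoint) of the embedding X ⊂ G. Let U ⊂ X be an open convex neighborhood of 0, let E : U → ℝ be a C² function, and let M : U → Y be a C¹ gradient map for E. Let K ⊂ X be a closed subspace and suppose that E(k) = 0 and E'(k) = 0 for every k ∈ U ∩ K. Assume that for each x ∈ U the bounded operator M'(x) : X → Y admits a bounded extension M₁(x) : G → H (compatible with the embeddings as above), and that the map U ∋ x ↦ M₁(x) ∈ L(G,H) is continuous in the operator norm. Then there exist constants C₁ ≥ 1 and δ ∈ (0,1] such that for every ξ ∈ X and every k ∈ U ∩ K with ‖ξ‖_X ≤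 δ, ‖k‖_X ≤ δ, and ξ + k ∈ U, one has |E(ξ + k)| ≤ C₁ ‖ξ‖_G². -/
open Set

/-- **Energy upper bound in the proof of the Morse–Bott Łojasiewicz–Simon theorem.**
`X, G, Y, H` are real Banach spaces with continuous embeddings `X ⊂ G` (via `jXG`) and
`Y ⊂ H ⊂ G* ⊂ X*` (via `jYH`, `jHG`, and the transpose of `jXG`).  `U ⊂ X` is an open convex
neighborhood of `0`, `E : U → ℝ` is `C²`, and `M : U → Y` is a `C¹` gradient map for `E`.
`K ⊂ X` is a closed subspace on which (within `U`) both `E` and `E'` vanish.  Each `M'(x)`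
admits a bounded extension `M₁(x) : G → H` depending continuously on `x` in the operator norm.
Then there are `C₁ ≥ 1` and `δ ∈ (0,1]` with `|E(ξ + k)| ≤ C₁ ‖ξ‖_G²` for all `ξ ∈ X` and
`k ∈ U ∩ K` with `‖ξ‖_X ≤ δ`, `‖k‖_X ≤ δ`, and `ξ + k ∈ U`. -/
theorem energy_upper_bound_morse_bott
    {X G Y H : Type*}
    [NormedAddCommGroup X] [NormedSpace ℝ X] [CompleteSpace X]
    [NormedAddCommGroup G] [NormedSpace ℝ G] [CompleteSpace G]
    [NormedAddCommGroup Y] [NormedSpace ℝ Y] [CompleteSpace Y]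
    [NormedAddCommGroup H] [NormedSpace ℝ H] [CompleteSpace H]
    -- continuous embeddings X ⊂ G, Y ⊂ H, H ⊂ G*
    (jXG : X →L[ℝ] G) (hjXG : Function.Injective jXG)
    (jYH : Y →L[ℝ] H) (hjYH : Function.Injective jYH)
    (jHG : H →L[ℝ] (G →L[ℝ] ℝ)) (hjHG : Function.Injective jHG)
    -- the embedding G* ⊂ X* is the transpose of X ⊂ G (and is injective)
    (hTransInj : Function.Injective fun φ : G →L[ℝ] ℝ => φ.comp jXG)
    -- open convex neighborhood of 0
    {U : Set X} (hUopen : IsOpen U) (hUconv : Convex ℝ U) (hU0 : (0 : X) ∈ U)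
    -- E is C² on U
    (E : X → ℝ) (hE : ContDiffOn ℝ 2 E U)
    -- M is a C¹ gradient map for E (M x regarded in X* via Y ⊂ H ⊂ G* ⊂ X*)
    (M : X → Y) (hM : ContDiffOn ℝ 1 M U)
    (hgrad : ∀ x ∈ U, ∀ v : X, fderiv ℝ E x v = jHG (jYH (M x)) (jXG v))
    -- K is a closed subspace and E(k) = 0, E'(k) = 0 for all k ∈ U ∩ K
    (K : Submodule ℝ X) (hKclosed : IsClosed (K : Set X))
    (hEK : ∀ k : X, k ∈ U → k ∈ K → E k = 0 ∧ fderiv ℝ E k = 0)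
    -- each M'(x) extends to a bounded operator M₁(x) : G → H,
    -- continuously in x in the operator norm
    (M₁ : X → (G →L[ℝ] H))
    (hExt : ∀ x ∈ U, ∀ v : X, M₁ x (jXG v) = jYH (fderiv ℝ M x v))
    (hM₁cont : ContinuousOn M₁ U) :
    ∃ C₁ : ℝ, 1 ≤ C₁ ∧ ∃ δ ∈ Ioc (0 : ℝ) 1,
      ∀ ξ : X, ∀ k : X, k ∈ U → k ∈ K → ‖ξ‖ ≤ δ → ‖k‖ ≤ δ → ξ + k ∈ U →
        |E (ξ + k)| ≤ C₁ * ‖jXG ξ‖ ^ 2 := by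
  -- continuity of M₁ at 0 gives a bound near 0
  have hcw : ContinuousWithinAt M₁ U 0 := hM₁cont 0 hU0
  rw [Metric.continuousWithinAt_iff] at hcw
  obtain ⟨δ', hδ'pos, hδ'⟩ := hcw 1 one_pos
  obtain ⟨r, hrpos, hr⟩ := Metric.isOpen_iff.mp hUopen 0 hU0
  set C : ℝ := ‖M₁ 0‖ + 1 with hC
  have hCpos : 0 ≤ C := by positivity
  refine ⟨max 1 (‖jHG‖ * C), le_max_left _ _, min 1 (min δ' r / 3), ⟨?_, min_le_left _ _⟩, ?_⟩
  · have : 0 < min δ' r := lt_min hδ'pos hrpos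
    positivity
  intro ξ k hkU hkK hξδ hkδ hsum
  set δ := min 1 (min δ' r / 3) with hδdef
  -- the path γ t = k + t • ξ stays in a small ball inside U
  have hγmem : ∀ t ∈ Icc (0:ℝ) 1, ‖k + t • ξ‖ < min δ' r := by
    intro t ht
    have h1 : ‖k + t • ξ‖ ≤ ‖k‖ + ‖t • ξ‖ := norm_add_le _ _
    have h2 : ‖t • ξ‖ ≤ ‖ξ‖ := by
      rw [norm_smul, Real.norm_eq_abs, abs_of_nonneg ht.1]
      nlinarith [ht.2, norm_nonneg ξ]
    have h3 : δ ≤ min δ' r / 3 := min_le_right _ _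
    have h4 : 0 < min δ' r := lt_min hδ'pos hrpos
    nlinarith
  have hγU : ∀ t ∈ Icc (0:ℝ) 1, k + t • ξ ∈ U := by
    intro t ht
    apply hr
    simp only [Metric.mem_ball, dist_zero_right]
    exact lt_of_lt_of_le (hγmem t ht) (min_le_right _ _)
  have hM₁bd : ∀ t ∈ Icc (0:ℝ) 1, ‖M₁ (k + t • ξ)‖ ≤ C := by
    intro t ht
    have := hδ' (hγU t ht) (by
      simp only [dist_zero_right]
      exact lt_of_lt_of_le (hγmem t ht) (min_le_left _ _))
    rw [dist_eq_norm] at this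
    calc ‖M₁ (k + t • ξ)‖ ≤ ‖M₁ (k + t • ξ) - M₁ 0‖ + ‖M₁ 0‖ := by
          simpa using norm_add_le (M₁ (k + t • ξ) - M₁ 0) (M₁ 0)
      _ ≤ C := by rw [hC]; linarith
  -- differentiability facts
  have hEdiff : ∀ x ∈ U, DifferentiableAt ℝ E x := fun x hx =>
    ((hE.differentiableOn (by norm_num)).differentiableAt (hUopen.mem_nhds hx))
  have hMdiff : ∀ x ∈ U, DifferentiableAt ℝ M x := fun x hx =>
    ((hM.differentiableOn one_ne_zero).differentiableAt (hUopen.mem_nhds hx))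
  have hγderiv : ∀ t : ℝ, HasDerivAt (fun s : ℝ => k + s • ξ) ξ t := by
    intro t
    simpa using ((hasDerivAt_id t).smul_const ξ).const_add k
  -- the linear functional L : Y → ℝ, L y = jHG (jYH y) (jXG ξ)
  set L : Y →L[ℝ] ℝ := ((jHG.flip (jXG ξ)).comp jYH) with hL
  have hLval : ∀ y : Y, L y = jHG (jYH y) (jXG ξ) := fun y => rfl
  -- φ t = fderiv E (γ t) ξ, as composition
  set γ : ℝ → X := fun s => k + s • ξ with hγ
  -- derivative of φ : bound on |φ t - φ 0|
  have hφderiv : ∀ t ∈ Icc (0:ℝ) 1,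
      HasDerivAt (fun s => L (M (γ s))) (L (fderiv ℝ M (γ t) ξ)) t := by
    intro t ht
    have h1 : HasFDerivAt M (fderiv ℝ M (γ t)) (γ t) := (hMdiff _ (hγU t ht)).hasFDerivAt
    have h2 := (L.hasFDerivAt.comp (γ t) h1).comp_hasDerivAt t (hγderiv t)
    exact h2
  have hφbound : ∀ t ∈ Icc (0:ℝ) 1,
      ‖L (fderiv ℝ M (γ t) ξ)‖ ≤ ‖jHG‖ * C * ‖jXG ξ‖ ^ 2 := by
    intro t ht
    have he : jYH (fderiv ℝ M (γ t) ξ) = M₁ (γ t) (jXG ξ) := (hExt _ (hγU t ht) ξ).symm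
    rw [hLval, he]
    calc ‖jHG (M₁ (γ t) (jXG ξ)) (jXG ξ)‖
        ≤ ‖jHG (M₁ (γ t) (jXG ξ))‖ * ‖jXG ξ‖ := (jHG _).le_opNorm _
      _ ≤ (‖jHG‖ * ‖M₁ (γ t) (jXG ξ)‖) * ‖jXG ξ‖ := by
          gcongr; exact jHG.le_opNorm _
      _ ≤ (‖jHG‖ * (‖M₁ (γ t)‖ * ‖jXG ξ‖)) * ‖jXG ξ‖ := by
          gcongr; exact (M₁ (γ t)).le_opNorm _
      _ ≤ (‖jHG‖ * (C * ‖jXG ξ‖)) * ‖jXG ξ‖ := by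
          gcongr
          exact hM₁bd t ht
      _ = ‖jHG‖ * C * ‖jXG ξ‖ ^ 2 := by ring
  -- mean value inequality for φ on [0,1]
  have hφmv : ∀ t ∈ Icc (0:ℝ) 1,
      ‖L (M (γ t)) - L (M (γ 0))‖ ≤ ‖jHG‖ * C * ‖jXG ξ‖ ^ 2 * ‖t - 0‖ := by
    intro t ht
    exact (convex_Icc (0:ℝ) 1).norm_image_sub_le_of_norm_hasDerivWithin_le
      (fun s hs => (hφderiv s hs).hasDerivWithinAt) hφbound
      (by constructor <;> norm_num) ht
  -- φ 0 = fderiv E k ξ = 0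
  have hφ0 : L (M (γ 0)) = 0 := by
    have hγ0 : γ 0 = k := by simp [hγ]
    rw [hγ0, hLval, ← hgrad k hkU ξ, (hEK k hkU hkK).2]
    rfl
  -- g t = E (γ t), g' t = φ t
  have hgderiv : ∀ t ∈ Icc (0:ℝ) 1,
      HasDerivAt (fun s => E (γ s)) (L (M (γ t))) t := by
    intro t ht
    have h1 : HasFDerivAt E (fderiv ℝ E (γ t)) (γ t) := (hEdiff _ (hγU t ht)).hasFDerivAt
    have h2 := h1.comp_hasDerivAt t (hγderiv t)
    have h3 : fderiv ℝ E (γ t) ξ = L (M (γ t)) := by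
      rw [hLval]; exact hgrad _ (hγU t ht) ξ
    rw [h3] at h2; exact h2
  have hgbound : ∀ t ∈ Icc (0:ℝ) 1, ‖L (M (γ t))‖ ≤ ‖jHG‖ * C * ‖jXG ξ‖ ^ 2 := by
    intro t ht
    have := hφmv t ht
    rw [hφ0, sub_zero] at this
    have ht1 : ‖t - 0‖ ≤ 1 := by
      rw [sub_zero, Real.norm_eq_abs, abs_of_nonneg ht.1]; exact ht.2
    calc ‖L (M (γ t))‖ ≤ ‖jHG‖ * C * ‖jXG ξ‖ ^ 2 * ‖t - 0‖ := this
      _ ≤ ‖jHG‖ * C * ‖jXG ξ‖ ^ 2 * 1 := by gcongr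
      _ = _ := mul_one _
  have hgmv : ‖E (γ 1) - E (γ 0)‖ ≤ ‖jHG‖ * C * ‖jXG ξ‖ ^ 2 * ‖(1:ℝ) - 0‖ :=
    (convex_Icc (0:ℝ) 1).norm_image_sub_le_of_norm_hasDerivWithin_le
      (fun s hs => (hgderiv s hs).hasDerivWithinAt) hgbound
      (by constructor <;> norm_num) (by constructor <;> norm_num)
  have hγ0 : γ 0 = k := by simp [hγ]
  have hγ1 : γ 1 = ξ + k := by simp [hγ, add_comm]
  rw [hγ0, hγ1, (hEK k hkU hkK).1, sub_zero] at hgmv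
  calc |E (ξ + k)| ≤ ‖jHG‖ * C * ‖jXG ξ‖ ^ 2 * ‖(1:ℝ) - 0‖ := hgmv
    _ = ‖jHG‖ * C * ‖jXG ξ‖ ^ 2 := by norm_num
    _ ≤ max 1 (‖jHG‖ * C) * ‖jXG ξ‖ ^ 2 := by gcongr; exact le_max_right _ _
end
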